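/- For σ > 0 and β < 0, for every μ ∈ (0, μ̄), where μ̄ = e^(2γ-1/σ)/(16π(-4πσβ)^(1/σ)), there exist exactly two frequencies ω₁ ∈ (ω̃, ω̄) and ω₂ ∈ (ω̄, +∞) such that M(ω₁) = M(ω₂) = μ, where M(ω) = (1/(4πω))·(-(log(√ω/2)+γ)/(2πβ))^(1/σ), ω̃ = 4e^(-2γ), ω̄ = 4e^(-2γ+1/σ). -/

import Mathlib

noncomputable section
open Real Filter Set Topology

/-- The Euler–Mascheroni constant. -/
def euγ : ℝ := Real.eulerMascheroniConstant

/-- The threshold frequency. -/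
def ωtilde : ℝ := 4 * Real.exp (-2 * euγ)

/-- The charge of the standing wave at frequency ω. -/
def charge (σ β ω : ℝ) : ℝ :=
  (-(Real.log (Real.sqrt ω / 2) + euγ) / (2 * π * β)) ^ (1 / (2 * σ))

/-- The inverse change of variables, frequency as a function of the charge. -/
def ωof (σ β q : ℝ) : ℝ := 4 * Real.exp (-2 * euγ - 4 * π * β * q ^ (2 * σ))

/-- Energy of the standing wave as a function of the frequency. -/
def Eω (σ β ω : ℝ) : ℝ :=
  (σ * (Real.log (Real.sqrt ω / 2) + euγ) / (2 * π * (σ + 1)) - 1 / (4 * π)) *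
    (-(Real.log (Real.sqrt ω / 2) + euγ) / (2 * π * β)) ^ (1 / σ)

/-- Energy of the standing wave as a function of the charge. -/
def Echarge (σ β q : ℝ) : ℝ := -q ^ 2 / (4 * π) - σ * β * q ^ (2 * σ + 2) / (σ + 1)

/-- Mass of the standing wave as a function of the frequency. -/
def Mω (σ β ω : ℝ) : ℝ :=
  (1 / (4 * π * ω)) * (-(Real.log (Real.sqrt ω / 2) + euγ) / (2 * π * β)) ^ (1 / σ)

/-- Mass of the standing wave as a function of the charge. -/
def Mq (σ β q : ℝ) : ℝ := q ^ 2 * Real.exp (2 * euγ + 4 * π * β * q ^ (2 * σ)) / (16 * π)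

/-- The minimizing charge. -/
def qbar (σ β : ℝ) : ℝ := (-(4 * π * σ * β)) ^ (-(1 / (2 * σ)) : ℝ)

/-- The blow-up energy threshold. -/
def Λ (σ β : ℝ) : ℝ := -σ / (4 * π * (σ + 1) * (-(4 * π * σ * β)) ^ (1 / σ))

/-- The frequency of minimal energy / maximal mass. -/
def ωbar (σ : ℝ) : ℝ := 4 * Real.exp (-2 * euγ + 1 / σ)

/-- The maximal mass. -/
def μbar (σ β : ℝ) : ℝ :=
  Real.exp (2 * euγ - 1 / σ) / (16 * π * (-(4 * π * σ * β)) ^ (1 / σ))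

def Wf (t : ℝ) : ℝ := 4 * Real.exp (2 * t - 2 * euγ)
def Tf (ω : ℝ) : ℝ := Real.log (Real.sqrt ω / 2) + euγ
def Ff (σ β t : ℝ) : ℝ :=
  Real.exp (2 * euγ) / (16 * π) * (Real.exp (-2 * t) * (t / (-(2 * π * β))) ^ (1 / σ))

lemma Wf_pos (t : ℝ) : 0 < Wf t := by
  have := Real.exp_pos (2 * t - 2 * euγ); unfold Wf; linarith

lemma Wf_strictMono : StrictMono Wf := fun s t h => by
  have := Real.exp_lt_exp.2 (show 2*s - 2*euγ < 2*t - 2*euγ by linarith)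
  unfold Wf; linarith

lemma Wf_Tf {ω : ℝ} (hω : 0 < ω) : Wf (Tf ω) = ω := by
  have h2 : (0:ℝ) < Real.sqrt ω / 2 := by positivity
  rw [Wf, Tf, show 2*(Real.log (Real.sqrt ω / 2) + euγ) - 2*euγ
      = Real.log (Real.sqrt ω / 2) + Real.log (Real.sqrt ω / 2) by ring,
    Real.exp_add, Real.exp_log h2]
  have := Real.sq_sqrt hω.le
  nlinarith [Real.sqrt_nonneg ω]

lemma sqrt_Wf (t : ℝ) : Real.sqrt (Wf t) = 2 * Real.exp (t - euγ) := by
  rw [show Wf t = (2 * Real.exp (t - euγ))^2 by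
    rw [mul_pow, ← Real.exp_nat_mul]; unfold Wf; norm_num; ring_nf]
  exact Real.sqrt_sq (by positivity)
lemma log_Wf (t : ℝ) : Real.log (Real.sqrt (Wf t) / 2) = t - euγ := by
  rw [sqrt_Wf, mul_comm, mul_div_assoc, div_self (two_ne_zero), mul_one, Real.log_exp]

lemma Mω_Wf (σ β t : ℝ) : Mω σ β (Wf t) = Ff σ β t := by
  rw [Mω, Ff, log_Wf, show -(t - euγ + euγ) / (2 * π * β) = t / (-(2 * π * β)) by
    rw [div_neg]; ring_nf, Wf]
  rw [show (1:ℝ) / (4 * π * (4 * Real.exp (2 * t - 2 * euγ)))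
      = Real.exp (2 * euγ) / (16 * π) * Real.exp (-2 * t) by
    rw [div_mul_eq_mul_div, div_eq_div_iff (by positivity) (by positivity)]
    have h : Real.exp (2*euγ) * Real.exp (-2*t) * Real.exp (2*t-2*euγ) = 1 := by
      rw [← Real.exp_add, ← Real.exp_add, show 2*euγ + -2*t + (2*t-2*euγ) = 0 by ring,
        Real.exp_zero]
    linear_combination (-16 * π) * h]
  ring

lemma Ff_continuous (σ β : ℝ) (hσ : 0 < σ) : Continuous (Ff σ β) := by
  apply Continuous.mul continuous_const
  apply Continuous.mul
  · exact Real.continuous_exp.comp (continuous_const.mul continuous_id)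
  · exact (continuous_id.div_const _).rpow_const fun x => Or.inr (by positivity)

lemma Ff_hasDerivAt (σ β : ℝ) (hσ : 0 < σ) (hβ : β < 0) {t : ℝ} (ht : 0 < t) :
    HasDerivAt (Ff σ β)
      (Real.exp (2 * euγ) / (16 * π) * (Real.exp (-2 * t) *
        (t / (-(2 * π * β))) ^ (1 / σ) * ((1 - 2 * σ * t) / (σ * t)))) t := by
  have hπ := Real.pi_pos
  have ha : (0:ℝ) < -(2 * π * β) := by nlinarith
  have hta : t / (-(2 * π * β)) ≠ 0 := by positivity
  have hσ' : σ ≠ 0 := hσ.ne'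
  have ht' : t ≠ 0 := ht.ne'
  have hπ' : π ≠ 0 := hπ.ne'
  have hβ' : β ≠ 0 := hβ.ne
  have hg : HasDerivAt (fun t : ℝ => Real.exp (-2 * t)) (Real.exp (-2 * t) * (-2)) t := by
    simpa using ((hasDerivAt_id t).const_mul (-2)).exp
  have hh := ((hasDerivAt_id t).div_const (-(2 * π * β))).rpow_const (p := 1/σ) (Or.inl hta)
  simp only [id] at hh
  have := (hg.mul hh).const_mul (Real.exp (2 * euγ) / (16 * π))
  refine this.congr_deriv ?_
  have hXsub : (t / (-(2 * π * β))) ^ (1 / σ - 1)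
      = (t / (-(2 * π * β))) ^ (1 / σ) / (t / (-(2 * π * β))) := by
    rw [Real.rpow_sub (by positivity), Real.rpow_one]
  rw [hXsub]
  field_simp
  ring

lemma Ff_mono (σ β : ℝ) (hσ : 0 < σ) (hβ : β < 0) :
    StrictMonoOn (Ff σ β) (Icc 0 (1 / (2 * σ))) := by
  have hπ := Real.pi_pos
  apply strictMonoOn_of_deriv_pos (convex_Icc _ _) (Ff_continuous σ β hσ).continuousOn
  intro x hx
  rw [interior_Icc, mem_Ioo] at hx
  rw [(Ff_hasDerivAt σ β hσ hβ hx.1).deriv]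
  have ha : (0:ℝ) < -(2 * π * β) := by nlinarith
  have h1 : 0 < 1 - 2 * σ * x := by
    have := hx.2
    rw [lt_div_iff₀ (by positivity)] at this
    nlinarith
  have hX : 0 < (x / (-(2 * π * β))) ^ (1 / σ) :=
    Real.rpow_pos_of_pos (div_pos hx.1 ha) _
  have hq : 0 < (1 - 2 * σ * x) / (σ * x) := div_pos h1 (mul_pos hσ hx.1)
  exact mul_pos (by positivity) (mul_pos (mul_pos (Real.exp_pos _) hX) hq)

lemma Ff_anti (σ β : ℝ) (hσ : 0 < σ) (hβ : β < 0) :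
    StrictAntiOn (Ff σ β) (Ici (1 / (2 * σ))) := by
  have hπ := Real.pi_pos
  apply strictAntiOn_of_deriv_neg (convex_Ici _) (Ff_continuous σ β hσ).continuousOn
  intro x hx
  rw [interior_Ici, mem_Ioi] at hx
  have hx0 : 0 < x := lt_trans (by positivity) hx
  rw [(Ff_hasDerivAt σ β hσ hβ hx0).deriv]
  have ha : (0:ℝ) < -(2 * π * β) := by nlinarith
  have h1 : 1 - 2 * σ * x < 0 := by
    rw [div_lt_iff₀ (by positivity)] at hx
    nlinarith
  have hX : 0 < (x / (-(2 * π * β))) ^ (1 / σ) :=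
    Real.rpow_pos_of_pos (div_pos hx0 ha) _
  have hK : 0 < Real.exp (2 * euγ) / (16 * π) := by positivity
  have hq : (1 - 2 * σ * x) / (σ * x) < 0 := div_neg_of_neg_of_pos h1 (mul_pos hσ hx0)
  exact mul_neg_of_pos_of_neg hK
    (mul_neg_of_pos_of_neg (mul_pos (Real.exp_pos _) hX) hq)

lemma Ff_zero (σ β : ℝ) (hσ : 0 < σ) : Ff σ β 0 = 0 := by
  rw [Ff, zero_div, Real.zero_rpow (by positivity : 1/σ ≠ 0)]
  ring

lemma Ff_top (σ β : ℝ) (hσ : 0 < σ) (hβ : β < 0) : Ff σ β (1 / (2 * σ)) = μbar σ β := by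
  have hπ := Real.pi_pos
  have ha : (0:ℝ) < -(2 * π * β) := by nlinarith
  have h2 : (2 * σ * (-(2 * π * β))) = -(4 * π * σ * β) := by ring
  have h3 : (1 / (2 * σ)) / (-(2 * π * β)) = (-(4 * π * σ * β))⁻¹ := by
    rw [← h2]; field_simp
  rw [Ff, h3, Real.inv_rpow (by nlinarith : (0:ℝ) ≤ -(4 * π * σ * β)), μbar]
  have h4 : Real.exp (2 * euγ) * Real.exp (-2 * (1 / (2 * σ))) = Real.exp (2 * euγ - 1 / σ) := by
    rw [← Real.exp_add]; congr 1; field_simp; ring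
  have h5 : (0:ℝ) < (-(4 * π * σ * β)) ^ (1 / σ) := Real.rpow_pos_of_pos (by nlinarith) _
  rw [← h4]
  field_simp

lemma Ff_tendsto (σ β : ℝ) (hσ : 0 < σ) (hβ : β < 0) :
    Tendsto (Ff σ β) atTop (𝓝 0) := by
  have hπ := Real.pi_pos
  have ha : (0:ℝ) < -(2 * π * β) := by nlinarith
  have h := (tendsto_rpow_mul_exp_neg_mul_atTop_nhds_zero (1/σ) 2 two_pos).const_mul
    (Real.exp (2 * euγ) / (16 * π) / ((-(2 * π * β)) ^ (1/σ)))
  rw [mul_zero] at h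
  apply h.congr'
  filter_upwards [eventually_ge_atTop (0:ℝ)] with t ht
  rw [Ff, Real.div_rpow ht ha.le]
  ring


theorem stmt10 (σ β μ : ℝ) (hσ : 0 < σ) (hβ : β < 0)
    (hμ : μ ∈ Set.Ioo 0 (μbar σ β)) :
    (∃! ω, ω ∈ Set.Ioo ωtilde (ωbar σ) ∧ Mω σ β ω = μ) ∧
    (∃! ω, ω ∈ Set.Ioi (ωbar σ) ∧ Mω σ β ω = μ) := by
  obtain ⟨hμ0, hμb⟩ := hμ
  have hT0 : (0:ℝ) < 1 / (2 * σ) := by positivity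
  have hWf0 : Wf 0 = ωtilde := by rw [Wf, ωtilde]; norm_num
  have hWfT0 : Wf (1 / (2 * σ)) = ωbar σ := by
    rw [Wf, ωbar]; congr 1; field_simp; ring
  have hmono := Ff_mono σ β hσ hβ
  have hanti := Ff_anti σ β hσ hβ
  have hFtop : Ff σ β (1 / (2 * σ)) = μbar σ β := Ff_top σ β hσ hβ
  have hωt_pos : (0:ℝ) < ωtilde := hWf0 ▸ Wf_pos 0
  constructor
  · -- first branch
    obtain ⟨t, htmem, htval⟩ := intermediate_value_Ioo hT0.le
      (Ff_continuous σ β hσ).continuousOn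
      (show μ ∈ Ioo (Ff σ β 0) (Ff σ β (1 / (2 * σ))) by
        rw [Ff_zero σ β hσ, hFtop]; exact ⟨hμ0, hμb⟩)
    refine ⟨Wf t, ⟨⟨?_, ?_⟩, (Mω_Wf σ β t).trans htval⟩, ?_⟩
    · rw [← hWf0]; exact Wf_strictMono htmem.1
    · rw [← hWfT0]; exact Wf_strictMono htmem.2
    · rintro ω' ⟨⟨h1, h2⟩, h3⟩
      have hω' : 0 < ω' := lt_trans hωt_pos h1
      have hW : Wf (Tf ω') = ω' := Wf_Tf hω'
      have ht1 : 0 < Tf ω' := by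
        rw [← Wf_strictMono.lt_iff_lt, hW, hWf0]; exact h1
      have ht2 : Tf ω' < 1 / (2 * σ) := by
        rw [← Wf_strictMono.lt_iff_lt, hW, hWfT0]; exact h2
      have hval : Ff σ β (Tf ω') = Ff σ β t := by
        rw [← Mω_Wf σ β (Tf ω'), hW, h3, htval]
      have := hmono.injOn ⟨ht1.le, ht2.le⟩ ⟨htmem.1.le, htmem.2.le⟩ hval
      rw [← hW, this]
  · -- second branch
    obtain ⟨t₁, ht₁F, ht₁T⟩ :=
      (((Ff_tendsto σ β hσ hβ).eventually (gt_mem_nhds hμ0)).and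
        (eventually_gt_atTop (1 / (2 * σ)))).exists
    obtain ⟨t, htmem, htval⟩ := intermediate_value_Ioo' ht₁T.le
      (Ff_continuous σ β hσ).continuousOn
      (show μ ∈ Ioo (Ff σ β t₁) (Ff σ β (1 / (2 * σ))) by
        rw [hFtop]; exact ⟨ht₁F, hμb⟩)
    refine ⟨Wf t, ⟨?_, (Mω_Wf σ β t).trans htval⟩, ?_⟩
    · rw [mem_Ioi, ← hWfT0]; exact Wf_strictMono htmem.1
    · rintro ω' ⟨h1, h3⟩
      rw [mem_Ioi] at h1
      have hωb_pos : (0:ℝ) < ωbar σ := hWfT0 ▸ Wf_pos _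
      have hω' : 0 < ω' := lt_trans hωb_pos h1
      have hW : Wf (Tf ω') = ω' := Wf_Tf hω'
      have ht1 : 1 / (2 * σ) < Tf ω' := by
        rw [← Wf_strictMono.lt_iff_lt, hW, hWfT0]; exact h1
      have hval : Ff σ β (Tf ω') = Ff σ β t := by
        rw [← Mω_Wf σ β (Tf ω'), hW, h3, htval]
      have := hanti.injOn (mem_Ici.2 ht1.le) (mem_Ici.2 htmem.1.le) hval
      rw [← hW, this]
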